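/- arXiv:1302.7053 — 2 statements merged into one kernel-verified Lean document; each statement's English description precedes it below -/
import Mathlib

section
/- Let A be a finitely generated abelian group and W a finite group acting on A, and let G = A ⋊ W be the semidirect product. Then every irreducible complex representation of G is finite-dimensional, of dimension at most |W|. -/
open Polynomial SemidirectProduct

lemma exists_eigen_of_aeval {V : Type} [AddCommGroup V] [Module ℂ V]
    (T : Module.End ℂ V) (U : Submodule ℂ V) (hU : ∀ v ∈ U, T v ∈ U)
    (p : Polynomial ℂ) (hp : p ≠ 0) (u : V) (hu : u ∈ U) (hu0 : u ≠ 0)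
    (hval : (Polynomial.aeval T) p u = 0) :
    ∃ (c : ℂ) (v : V), v ∈ U ∧ v ≠ 0 ∧ T v = c • v := by
  have haux : ∀ q : Polynomial ℂ, ∀ w ∈ U, (Polynomial.aeval T) q w ∈ U := by
    intro q
    induction q using Polynomial.induction_on' with
    | add f g hf hg => intro w hw; rw [map_add]; exact Submodule.add_mem U (hf w hw) (hg w hw)
    | monomial k c =>
      intro w hw
      rw [Polynomial.aeval_monomial]
      simp only [Module.End.mul_apply]
      have : ∀ k : ℕ, (T ^ k) w ∈ U := by
        intro k; induction k with
        | zero => simpa using hw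
        | succ k ihk => rw [pow_succ']; exact (by simpa [Module.End.mul_apply] using hU _ ihk : (T * T ^ k) w ∈ U)
      simpa [Algebra.smul_def] using Submodule.smul_mem U c (this k)
  suffices h : ∀ n : ℕ, ∀ p : Polynomial ℂ, p.natDegree = n → p ≠ 0 → ∀ u ∈ U, u ≠ 0 →
      (Polynomial.aeval T) p u = 0 → ∃ (c : ℂ) (v : V), v ∈ U ∧ v ≠ 0 ∧ T v = c • v by
    exact h _ p rfl hp u hu hu0 hval
  intro n
  induction n using Nat.strong_induction_on with
  | _ n ih =>
  intro p hn hp u hu hu0 hval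
  rcases eq_or_ne n 0 with h0 | h0
  · subst h0
    obtain ⟨c, rfl⟩ := Polynomial.natDegree_eq_zero.mp hn
    have hc : c ≠ 0 := by rintro rfl; simp at hp
    rw [Polynomial.aeval_C] at hval
    refine absurd ?_ hu0
    have := congrArg (fun v => c⁻¹ • v) hval
    simpa [Algebra.smul_def, smul_smul, inv_mul_cancel₀ hc] using this
  · have hdeg : 0 < p.natDegree := by omega
    obtain ⟨c, hc⟩ := Complex.exists_root (by rwa [Polynomial.natDegree_pos_iff_degree_pos] at hdeg)
    have hdvd : (X - C c) ∣ p := Polynomial.dvd_iff_isRoot.mpr hc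
    obtain ⟨q, hq⟩ := hdvd
    have hq0 : q ≠ 0 := by rintro rfl; simp at hq; exact hp hq
    have hXc : (X - C c : Polynomial ℂ) ≠ 0 := Polynomial.X_sub_C_ne_zero c
    have hdq : q.natDegree < n := by
      have := Polynomial.natDegree_mul hXc hq0
      rw [← hq, hn, Polynomial.natDegree_X_sub_C] at this
      omega
    set w := (Polynomial.aeval T) q u with hw
    have hwU : w ∈ U := haux q u hu
    rcases eq_or_ne w 0 with hw0 | hw0
    · exact ih _ hdq q rfl hq0 u hu hu0 hw0
    · refine ⟨c, w, hwU, hw0, ?_⟩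
      have : (Polynomial.aeval T) p u = T w - c • w := by
        rw [hq, map_mul]
        simp [Module.End.mul_apply, ← hw, sub_smul, Algebra.smul_def]
      rw [hval] at this  -- 0 = T w - c • w  (orientation?)
      have := this.symm
      linear_combination (norm := module) this

lemma countable_of_group_fg {A : Type} [Group A] (hA : Group.FG A) : Countable A := by
  obtain ⟨S, hSclos, hSfin⟩ := Group.fg_iff.mp hA
  have hfin : (S ∪ S⁻¹).Finite := hSfin.union hSfin.inv
  haveI := hfin.to_subtype
  have hsurj : Function.Surjective (fun l : List ↥(S ∪ S⁻¹) => (l.map Subtype.val).prod) := by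
    intro a
    have ha : a ∈ Submonoid.closure (S ∪ S⁻¹) := by
      rw [← Subgroup.closure_toSubmonoid]
      show a ∈ Subgroup.closure S
      rw [hSclos]; trivial
    obtain ⟨l, h1, h2⟩ := Submonoid.exists_list_of_mem_closure ha
    refine ⟨l.attach.map fun x => ⟨x.1, h1 x.1 x.2⟩, ?_⟩
    simp only [List.map_map]
    rw [show ((fun x : ↥(S ∪ S⁻¹) => x.1) ∘ fun x : {y // y ∈ l} => (⟨x.1, h1 x.1 x.2⟩ : ↥(S ∪ S⁻¹))) = fun x : {y // y ∈ l} => x.1 from rfl]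
    rw [List.attach_map_subtype_val]
    exact h2
  exact hsurj.countable

lemma central_scalar {V : Type} [AddCommGroup V] [Module ℂ V] [Nontrivial V]
    {G : Type} [Group G] [Countable G] (ρ : Representation ℂ G V)
    (hirr : ∀ p : Submodule ℂ V, (∀ g : G, p.map (ρ g) ≤ p) → p = ⊥ ∨ p = ⊤)
    (T : Module.End ℂ V) (hT : ∀ g : G, ρ g * T = T * ρ g) :
    ∃ c : ℂ, T = c • (1 : Module.End ℂ V) := by
  obtain ⟨v₀, hv₀⟩ := exists_ne (0 : V)
  have hone : ∀ v : V, ρ (1 : G) v = v := by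
    intro v; rw [map_one]; rfl
  -- rank bound
  have hrank : Module.rank ℂ V ≤ Cardinal.aleph0 := by
    set M := Submodule.span ℂ (Set.range fun g : G => ρ g v₀) with hM
    have hMinv : ∀ g : G, M.map (ρ g) ≤ M := by
      intro g
      rw [hM, Submodule.map_span_le]
      rintro m ⟨h, rfl⟩
      have : ρ g (ρ h v₀) = ρ (g * h) v₀ := by rw [map_mul]; rfl
      rw [this]
      exact Submodule.subset_span ⟨g * h, rfl⟩
    have hMne : M ≠ ⊥ := by
      intro hbot
      have : v₀ ∈ M := Submodule.subset_span ⟨1, hone v₀⟩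
      rw [hbot, Submodule.mem_bot] at this
      exact hv₀ this
    have hMtop : M = ⊤ := (hirr M hMinv).resolve_left hMne
    calc Module.rank ℂ V = Module.rank ℂ (⊤ : Submodule ℂ V) := (rank_top ℂ V).symm
      _ = Module.rank ℂ M := by rw [hMtop]
      _ ≤ Cardinal.mk (Set.range fun g : G => ρ g v₀) := rank_span_le _
      _ ≤ Cardinal.mk G := Cardinal.mk_range_le
      _ ≤ Cardinal.aleph0 := Cardinal.mk_le_aleph0
  by_cases hex : ∃ c : ℂ, LinearMap.ker (T - c • (1 : Module.End ℂ V)) ≠ ⊥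
  · obtain ⟨c, hc⟩ := hex
    have hinv : ∀ g : G, (LinearMap.ker (T - c • (1 : Module.End ℂ V))).map (ρ g) ≤
        LinearMap.ker (T - c • (1 : Module.End ℂ V)) := by
      intro g
      rintro v ⟨w, hw, rfl⟩
      replace hw : (T - c • (1 : Module.End ℂ V)) w = 0 := hw
      rw [LinearMap.mem_ker]
      have : (T - c • (1 : Module.End ℂ V)) * ρ g = ρ g * (T - c • (1 : Module.End ℂ V)) := by
        rw [sub_mul, mul_sub, hT g]
        congr 1
        ext v
        simp
      calc (T - c • (1 : Module.End ℂ V)) (ρ g w)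
          = ((T - c • (1 : Module.End ℂ V)) * ρ g) w := rfl
        _ = (ρ g * (T - c • (1 : Module.End ℂ V))) w := by rw [this]
        _ = ρ g ((T - c • (1 : Module.End ℂ V)) w) := rfl
        _ = 0 := by rw [hw, map_zero]
    have htop := (hirr _ hinv).resolve_left hc
    exact ⟨c, sub_eq_zero.mp (LinearMap.ker_eq_top.mp htop)⟩
  · push_neg at hex
    -- every T - c is injective
    have hinj : ∀ c : ℂ, Function.Injective (T - c • (1 : Module.End ℂ V)) := by
      intro c
      rw [← LinearMap.ker_eq_bot]
      exact hex c
    -- every T - c is surjective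
    have hsurj : ∀ c : ℂ, Function.Surjective (T - c • (1 : Module.End ℂ V)) := by
      intro c
      rw [← LinearMap.range_eq_top]
      refine (hirr _ ?_).resolve_left ?_
      · intro g
        rintro v ⟨w, ⟨x, rfl⟩, rfl⟩
        have hcomm : (T - c • (1 : Module.End ℂ V)) * ρ g = ρ g * (T - c • (1 : Module.End ℂ V)) := by
          rw [sub_mul, mul_sub, hT g]
          congr 1
          ext v
          simp
        refine ⟨ρ g x, ?_⟩
        calc (T - c • (1 : Module.End ℂ V)) (ρ g x)
            = ((T - c • (1 : Module.End ℂ V)) * ρ g) x := rfl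
          _ = (ρ g * (T - c • (1 : Module.End ℂ V))) x := by rw [hcomm]
          _ = ρ g ((T - c • (1 : Module.End ℂ V)) x) := rfl
      · intro hbot
        have : (T - c • (1 : Module.End ℂ V)) v₀ ∈ LinearMap.range (T - c • (1 : Module.End ℂ V)) :=
          ⟨v₀, rfl⟩
        rw [hbot, Submodule.mem_bot] at this
        exact hv₀ (hinj c (by simpa using this))
    -- the inverse family
    set e : ℂ → (V ≃ₗ[ℂ] V) := fun c =>
      LinearEquiv.ofBijective (T - c • (1 : Module.End ℂ V)) ⟨hinj c, hsurj c⟩ with he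
    set u : ℂ → V := fun c => (e c).symm v₀ with hu
    have hec : ∀ c : ℂ, (T - c • (1 : Module.End ℂ V)) (u c) = v₀ := by
      intro c
      have h1 : (e c) ((e c).symm v₀) = v₀ := (e c).apply_symm_apply v₀
      exact h1
    have haeval_lin : ∀ c : ℂ, (Polynomial.aeval T) (X - C c) = T - c • (1 : Module.End ℂ V) := by
      intro c
      simp [Algebra.algebraMap_eq_smul_one]
    -- no nonzero polynomial kills v₀
    have hnokill : ∀ q : Polynomial ℂ, (Polynomial.aeval T) q v₀ = 0 → q = 0 := by
      intro q hq
      by_contra hq0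
      obtain ⟨c, v, _, hvne, hvc⟩ := exists_eigen_of_aeval T ⊤ (fun v _ => trivial) q hq0 v₀ trivial hv₀ hq
      refine hvne (hinj c ?_)
      simp [sub_smul, LinearMap.sub_apply, hvc]
    -- linear independence of u
    have hli : LinearIndependent ℂ u := by
      rw [linearIndependent_iff]
      intro l hl
      by_contra hl0
      have hsupne : l.support.Nonempty := Finsupp.support_nonempty_iff.mpr hl0
      set Q : Polynomial ℂ :=
        ∑ a ∈ l.support, C (l a) * ∏ b ∈ l.support.erase a, (X - C b) with hQ
      have hkey : ∀ a ∈ l.support,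
          (Polynomial.aeval T) (∏ b ∈ l.support, (X - C b)) (u a)
          = (Polynomial.aeval T) (∏ b ∈ l.support.erase a, (X - C b)) v₀ := by
        intro a ha
        rw [← Finset.prod_erase_mul _ _ ha, map_mul]
        have : ((Polynomial.aeval T) (X - C a)) (u a) = v₀ := by rw [haeval_lin]; exact hec a
        rw [Module.End.mul_apply, this]
      have hQv : (Polynomial.aeval T) Q v₀ = 0 := by
        have h1 : ((Polynomial.aeval T) (∏ b ∈ l.support, (X - C b)))
            ((Finsupp.linearCombination ℂ u) l) = 0 := by rw [hl, map_zero]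
        rw [Finsupp.linearCombination_apply, Finsupp.sum, map_sum] at h1
        have h2 : ∀ a ∈ l.support,
            ((Polynomial.aeval T) (∏ b ∈ l.support, (X - C b))) (l a • u a)
            = l a • (Polynomial.aeval T) (∏ b ∈ l.support.erase a, (X - C b)) v₀ := by
          intro a ha
          rw [map_smul, hkey a ha]
        rw [Finset.sum_congr rfl h2] at h1
        rw [hQ, map_sum, LinearMap.sum_apply]
        rw [← h1]
        refine Finset.sum_congr rfl ?_
        intro a _
        rw [map_mul, Polynomial.aeval_C, Module.End.mul_apply]
        simp [Algebra.algebraMap_eq_smul_one]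
      have hQ0 : Q = 0 := hnokill Q hQv
      obtain ⟨μ, hμ⟩ := hsupne
      have heval : Polynomial.eval μ Q = l μ * ∏ b ∈ l.support.erase μ, (μ - b) := by
        rw [hQ, Polynomial.eval_finset_sum]
        rw [Finset.sum_eq_single μ]
        · simp [Polynomial.eval_prod]
        · intro a ha hane
          have hμa : μ ∈ l.support.erase a := Finset.mem_erase.mpr ⟨fun h => hane h.symm, hμ⟩
          rw [Polynomial.eval_mul, Polynomial.eval_prod]
          rw [Finset.prod_eq_zero hμa (by simp)]
          ring
        · intro h; exact absurd hμ h
      rw [hQ0] at heval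
      have hprodne : ∏ b ∈ l.support.erase μ, (μ - b) ≠ 0 := by
        refine Finset.prod_ne_zero_iff.mpr ?_
        intro b hb
        exact sub_ne_zero.mpr (Ne.symm (Finset.mem_erase.mp hb).1)
      have : l μ = 0 := by
        have := heval.symm
        simp at this
        rcases this with h | h
        · exact h
        · exact absurd h hprodne
      exact (Finsupp.mem_support_iff.mp hμ) this
    have hcard : Cardinal.mk ℂ ≤ Module.rank ℂ V := hli.cardinal_le_rank
    rw [Cardinal.mk_complex] at hcard
    exact absurd (hcard.trans hrank) (by simpa using Cardinal.aleph0_lt_continuum.not_ge)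

/-- Conjugation by a unit, as an algebra homomorphism. -/
def conjA {R S : Type*} [CommSemiring R] [Semiring S] [Algebra R S] (u : Sˣ) : S →ₐ[R] S where
  toFun := fun f => (u : S) * f * ((u⁻¹ : Sˣ) : S)
  map_one' := by simp
  map_mul' := fun f g => by
    have h : ((u⁻¹ : Sˣ) : S) * (u : S) = 1 := u.inv_mul
    calc (u : S) * (f * g) * ((u⁻¹ : Sˣ) : S)
        = (u : S) * f * (((u⁻¹ : Sˣ) : S) * (u : S)) * g * ((u⁻¹ : Sˣ) : S) := by
          rw [h, mul_one]; simp only [mul_assoc]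
      _ = ((u : S) * f * ((u⁻¹ : Sˣ) : S)) * ((u : S) * g * ((u⁻¹ : Sˣ) : S)) := by
          simp only [mul_assoc]
  map_zero' := by simp
  map_add' := fun f g => by rw [mul_add, add_mul]
  commutes' := fun c => by
    simp [Algebra.algebraMap_eq_smul_one, smul_mul_assoc, mul_smul_comm]

lemma conjA_apply {R S : Type*} [CommSemiring R] [Semiring S] [Algebra R S] (u : Sˣ) (f : S) :
    conjA (R := R) u f = (u : S) * f * ((u⁻¹ : Sˣ) : S) := rfl

/-- Abstract key lemma: if a commuting family `r : W → R` mapped into `End V` is permuted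
by conjugation by every `ρ g`, then each `f (r w₀)` satisfies a nonzero polynomial. -/
lemma key_poly {V : Type} [AddCommGroup V] [Module ℂ V] [Nontrivial V]
    {G : Type} [Group G] [Countable G] (ρ : Representation ℂ G V)
    (hirr : ∀ p : Submodule ℂ V, (∀ g : G, p.map (ρ g) ≤ p) → p = ⊥ ∨ p = ⊤)
    {R : Type} [CommRing R] [Nontrivial R] [Algebra ℂ R] (f : R →ₐ[ℂ] Module.End ℂ V)
    {W : Type} [Fintype W] (r : W → R) (σ : G → W ≃ W) (τ : G → (R →ₐ[ℂ] R))
    (hτ : ∀ g w, τ g (r w) = r (σ g w))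
    (hfτ : ∀ (g : G) (s : R), f (τ g s) = ρ g * f s * ρ g⁻¹)
    (w₀ : W) :
    ∃ P : Polynomial ℂ, P ≠ 0 ∧ Polynomial.aeval (f (r w₀)) P = 0 := by
  set n := Fintype.card W with hn
  set q : Polynomial R := ∏ w : W, (X - C (r w)) with hq
  have hmapq : ∀ g : G, q.map (τ g).toRingHom = q := by
    intro g
    rw [hq]
    calc (∏ w : W, (X - C (r w))).map (τ g).toRingHom
        = ∏ w : W, (X - C (r (σ g w))) := by
          rw [Polynomial.map_prod]
          refine Finset.prod_congr rfl fun w _ => ?_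
          rw [Polynomial.map_sub, Polynomial.map_X, Polynomial.map_C]
          exact congrArg (X - C ·) (hτ g w)
      _ = ∏ w : W, (X - C (r w)) := Fintype.prod_equiv (σ g) _ _ (fun w => rfl)
  have hcomm : ∀ (k : ℕ) (g : G), ρ g * f (q.coeff k) = f (q.coeff k) * ρ g := by
    intro k g
    have h1 : τ g (q.coeff k) = q.coeff k := by
      have h2 := congrArg (fun p : Polynomial R => p.coeff k) (hmapq g)
      simpa [Polynomial.coeff_map] using h2
    have h2 : ρ g * f (q.coeff k) * ρ g⁻¹ = f (q.coeff k) := by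
      rw [← hfτ g, h1]
    calc ρ g * f (q.coeff k)
        = ρ g * f (q.coeff k) * (ρ g⁻¹ * ρ g) := by
          rw [← map_mul, inv_mul_cancel, map_one, mul_one]
      _ = (ρ g * f (q.coeff k) * ρ g⁻¹) * ρ g := by simp only [mul_assoc]
      _ = f (q.coeff k) * ρ g := by rw [h2]
  choose sc hsc using fun k => central_scalar ρ hirr (f (q.coeff k)) (fun g => hcomm k g)
  have hqmonic : q.Monic := by
    rw [hq]; exact Polynomial.monic_prod_of_monic _ _ fun w _ => Polynomial.monic_X_sub_C _
  have hqdeg : q.natDegree = n := by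
    rw [hq, Polynomial.natDegree_prod_of_monic _ _ fun w _ => Polynomial.monic_X_sub_C _]
    simp [Polynomial.natDegree_X_sub_C, hn]
  obtain ⟨v₀, hv₀⟩ := exists_ne (0 : V)
  have hsc_top : sc n = 1 := by
    have h4 : f (q.coeff n) = 1 := by
      have h5 : q.coeff n = 1 := by rw [← hqdeg]; exact hqmonic.coeff_natDegree
      rw [h5, map_one]
    have h6 : sc n • (1 : Module.End ℂ V) = 1 := by rw [← hsc n, h4]
    have h7 : sc n • v₀ = v₀ := by
      have := congrArg (fun fl : Module.End ℂ V => fl v₀) h6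
      simpa using this
    by_contra hne
    have h8 : (sc n - 1) • v₀ = 0 := by rw [sub_smul, h7, one_smul, sub_self]
    rcases smul_eq_zero.mp h8 with h | h
    · exact hne (by rwa [sub_eq_zero] at h)
    · exact hv₀ h
  refine ⟨∑ k ∈ Finset.range (n + 1), Polynomial.C (sc k) * X ^ k, ?_, ?_⟩
  · intro hP0
    have hPcoeff : (∑ k ∈ Finset.range (n + 1), Polynomial.C (sc k) * X ^ k).coeff n = sc n := by
      rw [Polynomial.finset_sum_coeff]
      simp only [Polynomial.coeff_C_mul, Polynomial.coeff_X_pow]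
      rw [Finset.sum_eq_single n (fun k _ hk => by simp [Ne.symm hk])
        (fun h => absurd (Finset.self_mem_range_succ n) h)]
      simp
    rw [hP0] at hPcoeff
    simp only [Polynomial.coeff_zero] at hPcoeff
    rw [hsc_top] at hPcoeff
    exact one_ne_zero hPcoeff.symm
  · have heval : Polynomial.eval (r w₀) q = 0 := by
      rw [hq, Polynomial.eval_prod]
      exact Finset.prod_eq_zero (Finset.mem_univ w₀) (by simp)
    have h6 : f (Polynomial.eval (r w₀) q) = 0 := by rw [heval, map_zero]
    rw [Polynomial.eval_eq_sum_range, map_sum, hqdeg] at h6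
    have h7 : ∀ k ∈ Finset.range (n + 1),
        f (q.coeff k * (r w₀) ^ k) = sc k • (f (r w₀)) ^ k := by
      intro k _
      rw [map_mul, map_pow, hsc k, smul_mul_assoc, one_mul]
    rw [Finset.sum_congr rfl h7] at h6
    rw [show Polynomial.aeval (f (r w₀))
          (∑ k ∈ Finset.range (n + 1), Polynomial.C (sc k) * X ^ k)
        = ∑ k ∈ Finset.range (n + 1), sc k • (f (r w₀)) ^ k by
      rw [map_sum]
      refine Finset.sum_congr rfl fun k _ => ?_
      rw [map_mul, Polynomial.aeval_C, map_pow, Polynomial.aeval_X, Algebra.smul_def]]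
    exact h6

lemma conj_inl {A W : Type} [CommGroup A] [Group W] (φ : W →* MulAut A)
    (g : A ⋊[φ] W) (b : A) :
    g * SemidirectProduct.inl b * g⁻¹ = SemidirectProduct.inl (φ g.right b) := by
  ext
  · simp only [SemidirectProduct.mul_left, SemidirectProduct.mul_right,
      SemidirectProduct.inv_left, SemidirectProduct.inv_right, SemidirectProduct.left_inl,
      SemidirectProduct.right_inl, mul_one]
    rw [show (φ g.right) ((φ g.right⁻¹) g.left⁻¹) = g.left⁻¹ by
      rw [map_inv φ]; exact (φ g.right).apply_symm_apply _]
    rw [mul_comm g.left, mul_assoc, mul_inv_cancel, mul_one]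
  · simp

lemma exists_annihilating {A W V : Type} [CommGroup A] [Group W] [Finite W]
    (φ : W →* MulAut A) [Countable (SemidirectProduct A W φ)]
    [AddCommGroup V] [Module ℂ V] [Nontrivial V]
    (ρ : Representation ℂ (SemidirectProduct A W φ) V)
    (hirr : ∀ p : Submodule ℂ V,
      (∀ g : SemidirectProduct A W φ, p.map (ρ g) ≤ p) → p = ⊥ ∨ p = ⊤)
    (a : A) :
    ∃ P : Polynomial ℂ, P ≠ 0 ∧
      Polynomial.aeval (ρ (SemidirectProduct.inl a)) P = 0 := by
  haveI : Fintype W := Fintype.ofFinite W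
  set x : W → Module.End ℂ V := fun w => ρ (inl (φ w a)) with hx
  have hxcomm : ∀ p ∈ Set.range x, ∀ q ∈ Set.range x, p * q = q * p := by
    rintro _ ⟨v, rfl⟩ _ ⟨w, rfl⟩
    rw [hx]
    simp only []
    rw [← map_mul, ← map_mul, ← map_mul, ← map_mul, mul_comm]
  set S := Algebra.adjoin ℂ (Set.range x) with hS
  letI : CommRing ↥S := Algebra.adjoinCommRingOfComm ℂ hxcomm
  haveI : Nontrivial ↥S := by
    refine ⟨⟨0, 1, fun h => ?_⟩⟩
    have := congrArg (fun s : ↥S => (s : Module.End ℂ V)) h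
    simp only [ZeroMemClass.coe_zero, OneMemClass.coe_one] at this
    exact zero_ne_one this
  set y : W → ↥S := fun w => ⟨x w, Algebra.subset_adjoin (Set.mem_range_self w)⟩ with hy
  have hconj : ∀ (g : SemidirectProduct A W φ) (w : W),
      ρ g * x w * ρ g⁻¹ = x (g.right * w) := by
    intro g w
    rw [hx]
    simp only []
    rw [← map_mul, ← map_mul, conj_inl, ← MulAut.mul_apply, ← map_mul]
  have hconjA : ∀ (g : SemidirectProduct A W φ) (w : W),
      conjA (R := ℂ) (ρ.asGroupHom g) (x w) = x (g.right * w) := by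
    intro g w
    rw [conjA_apply, ← map_inv ρ.asGroupHom g, Representation.asGroupHom_apply,
      Representation.asGroupHom_apply]
    exact hconj g w
  have himg : ∀ (g : SemidirectProduct A W φ) (s : ↥S),
      (conjA (R := ℂ) (ρ.asGroupHom g)) (s : Module.End ℂ V) ∈ S := by
    intro g s
    have h1 : S.map (conjA (R := ℂ) (ρ.asGroupHom g)) ≤ S := by
      rw [hS, AlgHom.map_adjoin]
      apply Algebra.adjoin_mono
      rintro _ ⟨_, ⟨w, rfl⟩, rfl⟩
      exact ⟨g.right * w, (hconjA g w).symm⟩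
    exact h1 ⟨(s : Module.End ℂ V), s.2, rfl⟩
  set τ : (SemidirectProduct A W φ) → (↥S →ₐ[ℂ] ↥S) := fun g =>
    AlgHom.codRestrict ((conjA (R := ℂ) (ρ.asGroupHom g)).comp S.val) S (fun s => himg g s)
    with hτ
  have hτval : ∀ (g : SemidirectProduct A W φ) (s : ↥S),
      ((τ g s : ↥S) : Module.End ℂ V) = conjA (R := ℂ) (ρ.asGroupHom g) (s : Module.End ℂ V) :=
    fun g s => rfl
  have hτy : ∀ (g : SemidirectProduct A W φ) (w : W), τ g (y w) = y (g.right * w) := by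
    intro g w
    apply Subtype.ext
    rw [hτval]
    exact hconjA g w
  have hfτ : ∀ (g : SemidirectProduct A W φ) (s : ↥S),
      S.val (τ g s) = ρ g * S.val s * ρ g⁻¹ := by
    intro g s
    rw [show S.val (τ g s) = ((τ g s : ↥S) : Module.End ℂ V) from rfl, hτval,
      conjA_apply, ← map_inv ρ.asGroupHom g, Representation.asGroupHom_apply,
      Representation.asGroupHom_apply]
    rfl
  obtain ⟨P, hP0, hPa⟩ := key_poly ρ hirr S.val y
    (fun g => Equiv.mulLeft g.right) τ hτy hfτ 1
  refine ⟨P, hP0, ?_⟩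
  have : S.val (y 1) = ρ (SemidirectProduct.inl a) := by
    show x 1 = ρ (SemidirectProduct.inl a)
    rw [hx]
    simp
  rwa [this] at hPa


/-- Let `A` be a finitely generated abelian group (written
multiplicatively), `W` a finite group acting on `A`, and `G = A ⋊ W` the semidirect
product.  Then every irreducible complex representation of `G` is finite-dimensional,
of dimension at most `|W|`. -/
theorem irreducible_rep_of_semidirect_finiteDimensional
    (A : Type) [CommGroup A] (hA : Group.FG A)
    (W : Type) [Group W] [Finite W] (φ : W →* MulAut A)
    (V : Type) [AddCommGroup V] [Module ℂ V] [Nontrivial V]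
    (ρ : Representation ℂ (SemidirectProduct A W φ) V)
    (hirr : ∀ p : Submodule ℂ V,
      (∀ g : SemidirectProduct A W φ, p.map (ρ g) ≤ p) → p = ⊥ ∨ p = ⊤) :
    FiniteDimensional ℂ V ∧ Module.finrank ℂ V ≤ Nat.card W := by
  haveI : Countable A := countable_of_group_fg hA
  haveI : Countable (SemidirectProduct A W φ) := by
    have hinj : Function.Injective (fun g : SemidirectProduct A W φ => (g.left, g.right)) := by
      intro g1 g2 h
      exact SemidirectProduct.ext (congrArg Prod.fst h) (congrArg Prod.snd h)
    exact hinj.countable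
  -- pointwise commutation of the A-part
  classical
  have hcomm : ∀ (b c : A) (v : V), ρ (inl b) (ρ (inl c) v) = ρ (inl c) (ρ (inl b) v) := by
    intro b c v
    have h1 : ρ (inl b) * ρ (inl c) = ρ (inl c) * ρ (inl b) := by
      rw [← map_mul, ← map_mul, ← map_mul, ← map_mul, mul_comm]
    exact congrArg (fun f : Module.End ℂ V => f v) h1
  -- Step 1: common eigenvector for the generators
  obtain ⟨Sgen, hSgen⟩ := hA.out
  have hstep : ∀ F : Finset A, ∃ U : Submodule ℂ V, U ≠ ⊥ ∧
      (∀ (b : A), ∀ v ∈ U, ρ (inl b) v ∈ U) ∧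
      (∀ a ∈ F, ∃ c : ℂ, ∀ v ∈ U, ρ (inl a) v = c • v) := by
    intro F
    induction F using Finset.induction_on with
    | empty =>
      obtain ⟨v, hv⟩ := exists_ne (0 : V)
      exact ⟨⊤, Submodule.ne_bot_iff _ |>.mpr ⟨v, trivial, hv⟩, fun b v _ => trivial,
        fun a ha => absurd ha (Finset.notMem_empty a)⟩
    | @insert a F ha ih =>
      obtain ⟨U, hU0, hUinv, hUeig⟩ := ih
      obtain ⟨P, hP0, hPa⟩ := exists_annihilating φ ρ hirr a
      obtain ⟨u, hu, hu0⟩ := Submodule.exists_mem_ne_zero_of_ne_bot hU0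
      obtain ⟨c, v, hvU, hv0, hvc⟩ := exists_eigen_of_aeval (ρ (inl a)) U
        (fun v hv => hUinv a v hv) P hP0 u hu hu0
        (by rw [hPa]; rfl)
      set K := LinearMap.ker (ρ (inl a) - c • (1 : Module.End ℂ V)) with hK
      have hmemK : ∀ w : V, w ∈ K ↔ ρ (inl a) w = c • w := by
        intro w
        rw [hK, LinearMap.mem_ker, LinearMap.sub_apply, LinearMap.smul_apply,
          Module.End.one_apply, sub_eq_zero]
      refine ⟨U ⊓ K, ?_, ?_, ?_⟩
      · exact Submodule.ne_bot_iff _ |>.mpr ⟨v, ⟨hvU, (hmemK v).mpr hvc⟩, hv0⟩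
      · intro b w hw
        refine ⟨hUinv b w hw.1, (hmemK _).mpr ?_⟩
        rw [hcomm a b w, (hmemK w).mp hw.2, map_smul]
      · intro a' ha'
        rcases Finset.mem_insert.mp ha' with rfl | ha'F
        · exact ⟨c, fun w hw => (hmemK w).mp hw.2⟩
        · obtain ⟨c', hc'⟩ := hUeig a' ha'F
          exact ⟨c', fun w hw => hc' w hw.1⟩
  obtain ⟨U, hU0, hUinv, hUeig⟩ := hstep Sgen
  obtain ⟨v0, hv0U, hv00⟩ := Submodule.exists_mem_ne_zero_of_ne_bot hU0
  -- Step 2: v0 is an eigenvector for all of A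
  have happly : ∀ (b c : A) (v : V), ρ (inl b) (ρ (inl c) v) = ρ (inl (b * c)) v := by
    intro b c v
    rw [map_mul inl b c, map_mul ρ]
    rfl
  set H : Subgroup A :=
    { carrier := {b : A | ∃ c : ℂ, ρ (inl b) v0 = c • v0}
      one_mem' := ⟨1, by rw [map_one inl, map_one ρ, Module.End.one_apply, one_smul]⟩
      mul_mem' := by
        rintro b c ⟨cb, hb⟩ ⟨cc, hc⟩
        exact ⟨cb * cc, by rw [← happly b c v0, hc, map_smul, hb, smul_smul, mul_comm cb]⟩
      inv_mem' := by
        rintro b ⟨cb, hb⟩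
        have hv0back : ρ (inl b⁻¹) (ρ (inl b) v0) = v0 := by
          rw [happly, inv_mul_cancel, map_one inl, map_one ρ, Module.End.one_apply]
        have hcb0 : cb ≠ 0 := by
          rintro rfl
          rw [zero_smul] at hb
          rw [hb, map_zero] at hv0back
          exact hv00 hv0back.symm
        refine ⟨cb⁻¹, ?_⟩
        have h2 : v0 = cb • ρ (inl b⁻¹) v0 := by
          rw [← map_smul, ← hb, hv0back]
        rw [← inv_smul_eq_iff₀ hcb0] at h2
        exact h2.symm } with hH
  have hHtop : ∀ b : A, b ∈ H := by
    have h3 : Subgroup.closure (Sgen : Set A) ≤ H := by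
      rw [Subgroup.closure_le]
      intro a haS
      obtain ⟨c, hc⟩ := hUeig a haS
      exact ⟨c, hc v0 hv0U⟩
    rw [hSgen] at h3
    exact fun b => h3 trivial
  have hex : ∀ b : A, ∃ c : ℂ, ρ (inl b) v0 = c • v0 := hHtop
  choose χ hχ using hex
  -- Step 3: the span of the W-orbit of v0 is everything
  set f : W → V := fun w => ρ (inr w) v0 with hf
  set Usp := Submodule.span ℂ (Set.range f) with hUsp
  have hinlf : ∀ (b : A) (w : W), ρ (inl b) (f w) = χ ((φ w⁻¹) b) • f w := by
    intro b w
    have h4 : (inl b : SemidirectProduct A W φ) * inr w = inr w * inl ((φ w⁻¹) b) := by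
      have h5 := SemidirectProduct.inl_aut (φ := φ) w ((φ w⁻¹) b)
      rw [show (φ w) ((φ w⁻¹) b) = b by rw [map_inv φ]; exact (φ w).apply_symm_apply b] at h5
      rw [h5, mul_assoc, mul_assoc, ← map_mul inr, inv_mul_cancel, map_one inr, mul_one]
    have h6 : ρ (inl b) (ρ (inr w) v0) = ρ ((inl b) * inr w) v0 := by
      rw [map_mul ρ]; rfl
    rw [hf]
    simp only []
    rw [h6, h4, map_mul ρ]
    show ρ (inr w) (ρ (inl ((φ w⁻¹) b)) v0) = _
    rw [hχ ((φ w⁻¹) b), map_smul]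
  have hUspinv : ∀ g : SemidirectProduct A W φ, Usp.map (ρ g) ≤ Usp := by
    intro g
    rw [hUsp, Submodule.map_span_le]
    rintro _ ⟨w, rfl⟩
    have h7 : ρ g (f w) = ρ (inl g.left) (f (g.right * w)) := by
      have h8 : g * inr w = inl g.left * inr (g.right * w) := by
        ext <;> simp
      rw [hf]
      simp only []
      rw [show (ρ g) ((ρ (inr w)) v0) = ρ (g * inr w) v0 by rw [map_mul ρ]; rfl, h8, map_mul ρ]
      rfl
    rw [h7, hinlf]
    exact Submodule.smul_mem _ _ (Submodule.subset_span ⟨g.right * w, rfl⟩)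
  have hUspne : Usp ≠ ⊥ := by
    refine Submodule.ne_bot_iff _ |>.mpr ⟨v0, ?_, hv00⟩
    have : f 1 = v0 := by
      rw [hf]; simp only []; rw [map_one inr, map_one ρ, Module.End.one_apply]
    exact this ▸ Submodule.subset_span ⟨1, rfl⟩
  have hUsptop : Usp = ⊤ := (hirr Usp hUspinv).resolve_left hUspne
  -- conclusions
  have hfin : (Set.range f).Finite := Set.finite_range f
  haveI : FiniteDimensional ℂ V := by
    refine ⟨⟨hfin.toFinset, ?_⟩⟩
    rw [Set.Finite.coe_toFinset]
    rw [← hUsp]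
    exact hUsptop
  refine ⟨inferInstance, ?_⟩
  haveI : Fintype W := Fintype.ofFinite W
  refine Module.finrank_le_of_rank_le ?_
  have h9 : Module.rank ℂ V = Module.rank ℂ Usp := by
    rw [hUsptop, rank_top]
  rw [h9]
  calc Module.rank ℂ Usp ≤ Cardinal.mk (Set.range f) := rank_span_le _
    _ ≤ Cardinal.mk W := Cardinal.mk_range_le
    _ = Nat.card W := by rw [Cardinal.mk_fintype, Nat.card_eq_fintype_card]
end

section
/- Let A be an abelian group of finite index n in a group G, and let V be a finite-dimensional irreducible complex representation of G. Then the restriction of V to A decomposes as a direct sum of characters (one-dimensional A-subrepresentations), and dim V ≤ n. -/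
open Module Module.End Polynomial Set

/-- A commuting family of endomorphisms of a nonzero finite-dimensional complex vector
space has a common eigenvector. -/
lemma exists_common_eigenvector {ι : Type} (W : Type) [AddCommGroup W] [Module ℂ W]
    [FiniteDimensional ℂ W] [Nontrivial W] (f : ι → Module.End ℂ W)
    (hcomm : ∀ i j, Commute (f i) (f j)) :
    ∃ (v : W) (χ : ι → ℂ), v ≠ 0 ∧ ∀ i, f i v = χ i • v := by
  by_cases hall : ∀ i, ∃ μ, Module.End.eigenspace (f i) μ = ⊤
  · choose χ hχ using hall
    obtain ⟨v, hv⟩ := exists_ne (0 : W)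
    exact ⟨v, χ, hv, fun i => mem_eigenspace_iff.mp (by rw [hχ i]; trivial)⟩
  · push_neg at hall
    obtain ⟨i, hi⟩ := hall
    obtain ⟨μ, hμ⟩ := Module.End.exists_eigenvalue (f i)
    have hEbot : Module.End.eigenspace (f i) μ ≠ ⊥ := hμ
    have hEtop : Module.End.eigenspace (f i) μ ≠ ⊤ := hi μ
    have hmap : ∀ j, ∀ x ∈ Module.End.eigenspace (f i) μ,
        f j x ∈ Module.End.eigenspace (f i) μ := fun j x hx =>
      Module.End.mapsTo_genEigenspace_of_comm (hcomm i j) μ 1 hx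
    haveI : Nontrivial (Module.End.eigenspace (f i) μ) :=
      Submodule.nontrivial_iff_ne_bot.mpr hEbot
    have hlt : finrank ℂ (Module.End.eigenspace (f i) μ) < finrank ℂ W :=
      Submodule.finrank_lt hEtop
    obtain ⟨v, χ, hv0, hv⟩ := exists_common_eigenvector (Module.End.eigenspace (f i) μ)
      (fun j => (f j).restrict (hmap j))
      (fun j k => LinearMap.restrict_commute (hcomm j k) _ _)
    refine ⟨v, χ, by simpa using hv0, fun j => ?_⟩
    have h1 := congrArg Subtype.val (hv j)
    simpa [LinearMap.restrict_apply] using h1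
termination_by finrank ℂ W
decreasing_by exact hlt

/-- An endomorphism whose eigenspaces span is semisimple. -/
lemma isSemisimple_of_iSup_eigenspace_eq_top {W : Type} [AddCommGroup W] [Module ℂ W]
    [FiniteDimensional ℂ W] (f : Module.End ℂ W)
    (h : ⨆ μ : ℂ, Module.End.eigenspace f μ = ⊤) : f.IsSemisimple := by
  classical
  set s : Finset ℂ := (minpoly ℂ f).roots.toFinset with hs
  set p : ℂ[X] := ∏ μ ∈ s, (X - C μ) with hp
  have hsep : p.Separable := by
    rw [hp]
    exact Polynomial.separable_prod_X_sub_C_iff'.mpr (fun i _ j _ hij => hij)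
  have hmin : minpoly ℂ f ≠ 0 := minpoly.ne_zero (Algebra.IsIntegral.isIntegral _)
  have haev : aeval f p = 0 := by
    rw [← LinearMap.ker_eq_top, eq_top_iff, ← h]
    apply iSup_le
    intro μ v hv
    rcases eq_or_ne v 0 with rfl | hv0
    · simp
    have hμs : μ ∈ s := by
      have : Module.End.HasEigenvalue f μ :=
        Module.End.hasEigenvalue_of_hasEigenvector ⟨hv, hv0⟩
      have hroot := Module.End.isRoot_of_hasEigenvalue this
      rw [hs]
      rw [Multiset.mem_toFinset, Polynomial.mem_roots hmin]
      exact hroot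
    rw [LinearMap.mem_ker, hp, ← Finset.prod_erase_mul s _ hμs, map_mul,
      Module.End.mul_apply]
    have : (aeval f (X - C μ)) v = 0 := by
      simp only [map_sub, aeval_X, aeval_C, LinearMap.sub_apply,
        Module.algebraMap_end_apply]
      rw [mem_eigenspace_iff.mp hv, sub_self]
    rw [this, map_zero]
  exact isSemisimple_of_squarefree_aeval_eq_zero hsep.squarefree haev

/-- The eigenspaces of a semisimple endomorphism span. -/
lemma iSup_eigenspace_eq_top_of_isSemisimple {W : Type} [AddCommGroup W] [Module ℂ W]
    [FiniteDimensional ℂ W] (f : Module.End ℂ W) (h : f.IsSemisimple) :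
    ⨆ μ : ℂ, Module.End.eigenspace f μ = ⊤ := by
  have h1 := Module.End.iSup_maxGenEigenspace_eq_top f
  simp only [h.isFinitelySemisimple.maxGenEigenspace_eq_eigenspace] at h1
  exact h1

/-- If an injective endomorphism has a semisimple power, it is semisimple. -/
lemma isSemisimple_of_pow {W : Type} [AddCommGroup W] [Module ℂ W]
    [FiniteDimensional ℂ W] (f : Module.End ℂ W) (hinj : Function.Injective f)
    {k : ℕ} (hk : k ≠ 0) (h : (f ^ k).IsSemisimple) : f.IsSemisimple := by
  apply isSemisimple_of_iSup_eigenspace_eq_top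
  have htop := iSup_eigenspace_eq_top_of_isSemisimple _ h
  rw [eq_top_iff, ← htop]
  apply iSup_le
  intro μ
  rcases eq_or_ne μ 0 with rfl | hμ
  · rw [Module.End.eigenspace_zero, LinearMap.ker_eq_bot.mpr]
    · exact bot_le
    · rw [Module.End.coe_pow]
      exact hinj.iterate k
  · set E := Module.End.eigenspace (f ^ k) μ with hE
    have hmapsto : ∀ x ∈ E, f x ∈ E := fun x hx =>
      Module.End.mapsTo_genEigenspace_of_comm ((Commute.refl f).pow_left k) μ 1 hx
    set g : Module.End ℂ E := f.restrict hmapsto with hg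
    have haev : aeval g (X ^ k - C μ) = 0 := by
      have hpow : g ^ k = (f ^ k).restrict
          (fun x hx => Module.End.pow_apply_mem_of_forall_mem k hmapsto x hx) :=
        Module.End.pow_restrict k hmapsto
      rw [map_sub, aeval_X_pow, aeval_C]
      apply LinearMap.ext
      rintro ⟨v, hv⟩
      have hv' : (f ^ k) v = μ • v := mem_eigenspace_iff.mp hv
      apply Subtype.ext
      simp [hpow, LinearMap.restrict_apply, hv', Module.algebraMap_end_apply]
    have hgss : g.IsSemisimple := by
      refine isSemisimple_of_squarefree_aeval_eq_zero
        ((Polynomial.separable_X_pow_sub_C μ ?_ hμ).squarefree) haev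
      exact_mod_cast Nat.cast_ne_zero.mpr hk
    have hgtop := iSup_eigenspace_eq_top_of_isSemisimple _ hgss
    calc E = Submodule.map E.subtype ⊤ := by
            rw [Submodule.map_top, Submodule.range_subtype]
      _ = Submodule.map E.subtype (⨆ ν : ℂ, Module.End.eigenspace g ν) := by rw [hgtop]
      _ = ⨆ ν : ℂ, Submodule.map E.subtype (Module.End.eigenspace g ν) :=
            Submodule.map_iSup _ _
      _ ≤ ⨆ ν : ℂ, Module.End.eigenspace f ν :=
            iSup_mono fun ν => Module.End.eigenspace_restrict_le_eigenspace f hmapsto ν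

/-- Let `A` be an abelian subgroup of finite index `n` in a group
`G`, and `V` a finite-dimensional irreducible complex representation of `G`.  Then the
restriction of `V` to `A` decomposes as a direct sum of one-dimensional
`A`-subrepresentations, and `dim V ≤ n`. -/
theorem irreducible_rep_of_abelian_finite_index
    (G : Type) [Group G] (A : Subgroup G)
    (hab : ∀ a ∈ A, ∀ b ∈ A, a * b = b * a)
    (n : ℕ) (hn : A.index = n) (hnpos : n ≠ 0)
    (V : Type) [AddCommGroup V] [Module ℂ V] [FiniteDimensional ℂ V] [Nontrivial V]
    (ρ : Representation ℂ G V)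
    (hirr : ∀ p : Submodule ℂ V, (∀ g : G, p.map (ρ g) ≤ p) → p = ⊥ ∨ p = ⊤) :
    (∃ (ι : Type) (f : ι → Submodule ℂ V),
      iSupIndep f ∧ iSup f = ⊤ ∧
      ∀ i, Module.finrank ℂ (f i) = 1 ∧ ∀ a ∈ A, (f i).map (ρ a) ≤ f i) ∧
    Module.finrank ℂ V ≤ n := by
  classical
  haveI hAfin : A.FiniteIndex := ⟨hn ▸ hnpos⟩
  set N := A.normalCore with hNdef
  haveI hNfin : N.FiniteIndex := Subgroup.finiteIndex_normalCore A
  have hNle : N ≤ A := A.normalCore_le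
  have hNnorm : N.Normal := A.normalCore_normal
  -- injectivity of ρ g
  have hinj : ∀ g : G, Function.Injective (ρ g) := by
    intro g x y hxy
    have h1 := congrArg (ρ g⁻¹) hxy
    simpa [← Module.End.mul_apply, ← map_mul] using h1
  -- commuting families
  have hcommA : ∀ a b : A, Commute (ρ (a : G)) (ρ (b : G)) := by
    intro a b
    show ρ (a : G) * ρ (b : G) = ρ (b : G) * ρ (a : G)
    rw [← map_mul, ← map_mul, hab (a : G) a.2 (b : G) b.2]
  have hcommN : ∀ x y : N, Commute (ρ (x : G)) (ρ (y : G)) := fun x y =>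
    hcommA ⟨(x : G), hNle x.2⟩ ⟨(y : G), hNle y.2⟩
  -- the span of all joint eigenspaces for N is a nonzero G-stable subspace
  set E : Submodule ℂ V :=
    ⨆ χ : N → ℂ, ⨅ x : N, Module.End.eigenspace (ρ (x : G)) (χ x) with hEdef
  obtain ⟨v₀, χ₀, hv₀, hχ₀⟩ :=
    exists_common_eigenvector V (fun x : N => (ρ (x : G) : Module.End ℂ V)) hcommN
  have hEne : E ≠ ⊥ := by
    intro hbot
    apply hv₀
    have hv₀E : v₀ ∈ E := by
      refine le_iSup (fun χ : N → ℂ =>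
        ⨅ x : N, Module.End.eigenspace (ρ (x : G)) (χ x)) χ₀ ?_
      simp only [Submodule.mem_iInf]
      exact fun x => mem_eigenspace_iff.mpr (hχ₀ x)
    rwa [hbot, Submodule.mem_bot] at hv₀E
  have hEstab : ∀ g : G, E.map (ρ g) ≤ E := by
    intro g
    rw [hEdef, Submodule.map_iSup]
    apply iSup_le
    intro χ
    have hconj : ∀ x : N, (g⁻¹ * (x : G) * g) ∈ N := by
      intro x
      simpa using hNnorm.conj_mem (x : G) x.2 g⁻¹
    have key : (⨅ x : N, Module.End.eigenspace (ρ (x : G)) (χ x)).map (ρ g) ≤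
        ⨅ x : N, Module.End.eigenspace (ρ (x : G)) (χ ⟨g⁻¹ * (x : G) * g, hconj x⟩) := by
      rintro _ ⟨v, hv, rfl⟩
      simp only [SetLike.mem_coe, Submodule.mem_iInf] at hv
      simp only [Submodule.mem_iInf]
      intro x
      rw [mem_eigenspace_iff]
      have h1 : (ρ (x : G)) (ρ g v) = ρ g ((ρ (g⁻¹ * (x : G) * g)) v) := by
        rw [← Module.End.mul_apply, ← Module.End.mul_apply, ← map_mul, ← map_mul]
        congr 2
        group
      have h2' := hv ⟨g⁻¹ * (x : G) * g, hconj x⟩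
      have h2 : (ρ (g⁻¹ * (x : G) * g)) v = χ ⟨g⁻¹ * (x : G) * g, hconj x⟩ • v :=
        mem_eigenspace_iff.mp h2'
      rw [h1, h2, map_smul]
    exact key.trans (le_iSup (fun χ : N → ℂ =>
      ⨅ x : N, Module.End.eigenspace (ρ (x : G)) (χ x)) _)
  have hEtop : E = ⊤ := (hirr E hEstab).resolve_left hEne
  -- elements of N act semisimply
  have hssN : ∀ x : N, Module.End.IsSemisimple (ρ (x : G) : Module.End ℂ V) := by
    intro x
    apply isSemisimple_of_iSup_eigenspace_eq_top
    rw [eq_top_iff, ← hEtop, hEdef]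
    apply iSup_le
    intro χ
    exact (iInf_le _ x).trans
      (le_iSup (fun μ : ℂ => Module.End.eigenspace (ρ (x : G)) μ) (χ x))
  -- elements of A act semisimply
  have hssA : ∀ a : A, Module.End.IsSemisimple (ρ (a : G) : Module.End ℂ V) := by
    intro a
    set q : G ⧸ N := QuotientGroup.mk (a : G) with hq
    have hkpos : orderOf q ≠ 0 := (orderOf_pos q).ne'
    have hmem : ((a : G) ^ orderOf q) ∈ N := by
      rw [← QuotientGroup.eq_one_iff]
      have : ((((a : G) : G) ^ orderOf q : G) : G ⧸ N) = q ^ orderOf q := by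
        rw [hq]
        simp
      rw [this, pow_orderOf_eq_one]
    refine isSemisimple_of_pow _ (hinj _) hkpos ?_
    have hpow : (ρ (a : G) : Module.End ℂ V) ^ orderOf q = ρ ((a : G) ^ orderOf q) :=
      (map_pow ρ _ _).symm
    rw [hpow]
    exact hssN ⟨_, hmem⟩
  have hFSA : ∀ a : A, Module.End.IsFinitelySemisimple (ρ (a : G) : Module.End ℂ V) :=
    fun a => (hssA a).isFinitelySemisimple
  -- the joint generalized eigenspace decomposition for A
  set P : (A → ℂ) → Submodule ℂ V :=
    fun χ => ⨅ a : A, Module.End.maxGenEigenspace (ρ (a : G)) (χ a) with hPdef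
  have hPtop : ⨆ χ, P χ = ⊤ :=
    Module.End.iSup_iInf_maxGenEigenspace_eq_top_of_iSup_maxGenEigenspace_eq_top_of_commute
      _ (fun a b _ => hcommA a b) (fun a => Module.End.iSup_maxGenEigenspace_eq_top _)
  have hPindep : iSupIndep P :=
    Module.End.independent_iInf_maxGenEigenspace_of_forall_mapsTo _
      (fun a b φ => Module.End.mapsTo_maxGenEigenspace_of_comm (hcommA b a) φ)
  have hscal : ∀ (χ : A → ℂ) (a : A), ∀ v ∈ P χ, ρ (a : G) v = χ a • v := by
    intro χ a v hv
    have hv' : v ∈ Module.End.maxGenEigenspace (ρ (a : G)) (χ a) :=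
      (Submodule.mem_iInf _).mp hv a
    rw [(hFSA a).maxGenEigenspace_eq_eigenspace] at hv'
    exact mem_eigenspace_iff.mp hv'
  have hint : DirectSum.IsInternal P :=
    DirectSum.isInternal_submodule_of_iSupIndep_of_iSup_eq_top hPindep hPtop
  set b : ∀ χ : A → ℂ, Basis (Basis.ofVectorSpaceIndex ℂ (P χ)) ℂ (P χ) :=
    fun χ => Basis.ofVectorSpace ℂ (P χ) with hb
  set B := hint.collectedBasis b with hB
  constructor
  · refine ⟨(Σ χ : A → ℂ, Basis.ofVectorSpaceIndex ℂ (P χ)),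
      fun i => ℂ ∙ (B i), B.linearIndependent.iSupIndep_span_singleton, ?_, ?_⟩
    · rw [← Submodule.span_range_eq_iSup, B.span_eq]
    · intro i
      refine ⟨finrank_span_singleton (B.ne_zero i), ?_⟩
      intro g hg
      have hBi : B i ∈ P i.1 := hint.collectedBasis_mem b i
      have hact : ρ g (B i) = i.1 ⟨g, hg⟩ • B i := hscal i.1 ⟨g, hg⟩ _ hBi
      rw [Submodule.map_span, Set.image_singleton, hact]
      exact Submodule.span_le.mpr (Set.singleton_subset_iff.mpr
        (Submodule.smul_mem _ _ (Submodule.mem_span_singleton_self _)))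
  -- dimension bound
  · obtain ⟨w, ψ, hw0, hwψ⟩ :=
      exists_common_eigenvector V (fun a : A => (ρ (a : G) : Module.End ℂ V)) hcommA
    haveI : Fintype (G ⧸ A) := Fintype.ofFinite _
    set F : G ⧸ A → V := fun q => ρ q.out w with hF
    set U := Submodule.span ℂ (Set.range F) with hU
    have hstab : ∀ g : G, U.map (ρ g) ≤ U := by
      intro g
      rw [hU, Submodule.map_span_le]
      rintro _ ⟨q, rfl⟩
      have h1 : ρ g (F q) = ρ (g * q.out) w := by
        rw [hF, ← Module.End.mul_apply, ← map_mul]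
      have hmem : (QuotientGroup.mk (g * q.out) : G ⧸ A).out⁻¹ * (g * q.out) ∈ A :=
        QuotientGroup.eq.mp (QuotientGroup.out_eq' _)
      have h3 : (g * q.out : G) = (QuotientGroup.mk (g * q.out) : G ⧸ A).out *
          ((QuotientGroup.mk (g * q.out) : G ⧸ A).out⁻¹ * (g * q.out)) := by group
      have h2 : ρ (g * q.out) w =
          ψ ⟨_, hmem⟩ • F (QuotientGroup.mk (g * q.out) : G ⧸ A) :=
        calc ρ (g * q.out) w
            = ρ ((QuotientGroup.mk (g * q.out) : G ⧸ A).out *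
                ((QuotientGroup.mk (g * q.out) : G ⧸ A).out⁻¹ * (g * q.out))) w :=
              congrArg (fun z => ρ z w) h3
          _ = ρ (QuotientGroup.mk (g * q.out) : G ⧸ A).out
                (ρ ((QuotientGroup.mk (g * q.out) : G ⧸ A).out⁻¹ * (g * q.out)) w) := by
              rw [map_mul]; rfl
          _ = ρ (QuotientGroup.mk (g * q.out) : G ⧸ A).out (ψ ⟨_, hmem⟩ • w) :=
              congrArg _ (hwψ ⟨_, hmem⟩)
          _ = ψ ⟨_, hmem⟩ • F (QuotientGroup.mk (g * q.out) : G ⧸ A) :=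
              map_smul _ _ _
      rw [h1, h2]
      exact Submodule.smul_mem _ _ (Submodule.subset_span ⟨_, rfl⟩)
    have hUne : U ≠ ⊥ := by
      intro hbot
      have hmemU : F (QuotientGroup.mk 1) ∈ U := Submodule.subset_span ⟨_, rfl⟩
      rw [hbot, Submodule.mem_bot] at hmemU
      apply hw0
      have h5 : ρ (QuotientGroup.mk (1 : G) : G ⧸ A).out w =
          ρ (QuotientGroup.mk (1 : G) : G ⧸ A).out 0 := by
        rw [map_zero]
        exact hmemU
      exact hinj _ h5
    have hUtop : U = ⊤ := (hirr U hstab).resolve_left hUne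
    have h4 : finrank ℂ V = finrank ℂ U := by rw [hUtop, finrank_top]
    rw [h4, hU]
    calc finrank ℂ (Submodule.span ℂ (Set.range F)) ≤ (Set.range F).toFinset.card :=
          finrank_span_le_card _
      _ = Fintype.card (Set.range F) := Set.toFinset_card _
      _ ≤ Fintype.card (G ⧸ A) := Fintype.card_range_le F
      _ = n := by rw [← Nat.card_eq_fintype_card, ← Subgroup.index, hn]
end
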